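/- arXiv:1709.07996 — 3 statements merged into one kernel-verified Lean document; each statement's English description precedes it below -/
import Mathlib

section
/- Let z ∈ Ĩ_n and i ∈ ℤ with z(i) ≠ i, z(i+1) ≠ i+1, and z(i) < z(i+1). Then ℓ(s_i z s_i) = ℓ(z) + 2, where ℓ is the Coxeter length on S̃_n. -/
open Finset

/-- `w` is an element of the affine symmetric group `S̃_n`: a bijection `ℤ → ℤ` with
`w (i + n) = w i + n` for all `i` and `∑_{i=1}^n w i = n (n+1)/2`. -/
def IsAffine (n : ℕ) (w : Equiv.Perm ℤ) : Prop :=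
  (∀ i : ℤ, w (i + n) = w i + n) ∧ ∑ i ∈ Finset.Icc (1 : ℤ) (n : ℤ), (w i - i) = 0

/-- The Coxeter length of `w ∈ S̃_n`: the number of inversions `(i, j)`, `i < j`,
`w i > w j`, counted up to the equivalence `(i,j) ∼ (i+n, j+n)` (representatives with
`i ∈ [n]`). -/
noncomputable def affLen (n : ℕ) (w : Equiv.Perm ℤ) : ℕ :=
  Nat.card {p : ℤ × ℤ // 1 ≤ p.1 ∧ p.1 ≤ (n : ℤ) ∧ p.1 < p.2 ∧ w p.2 < w p.1}

/-- The absolute length of an involution `z ∈ Ĩ_n`: the number of 2-cycles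
`(i, j)` with `i < j = z i`, counted up to the equivalence `(i,j) ∼ (i+n, j+n)`. -/
noncomputable def absLen (n : ℕ) (z : Equiv.Perm ℤ) : ℕ :=
  Nat.card {p : ℤ × ℤ // 1 ≤ p.1 ∧ p.1 ≤ (n : ℤ) ∧ p.1 < p.2 ∧ z p.1 = p.2}

/-- The underlying function of the reflection `t_{i j}`: it sends `i + m n ↦ j + m n` and
`j + m n ↦ i + m n` for all `m`, fixing everything else. -/
def tFun (n : ℕ) (i j x : ℤ) : ℤ :=
  if (n : ℤ) ∣ x - i then x + (j - i) else if (n : ℤ) ∣ x - j then x - (j - i) else x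

theorem tFun_comp (n : ℕ) (i j x : ℤ) : tFun n j i (tFun n i j x) = x := by
  unfold tFun
  by_cases h1 : (n : ℤ) ∣ x - i
  · rw [if_pos h1]
    have c1 : (n : ℤ) ∣ x + (j - i) - j := by
      have e : x + (j - i) - j = x - i := by ring
      rw [e]; exact h1
    rw [if_pos c1]; ring
  · rw [if_neg h1]
    by_cases h2 : (n : ℤ) ∣ x - j
    · rw [if_pos h2]
      have c1 : ¬ (n : ℤ) ∣ x - (j - i) - j := by
        intro hc
        apply h1
        have e : x - i = 2 * (x - j) - (x - (j - i) - j) := by ring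
        rw [e]
        exact dvd_sub (Dvd.dvd.mul_left h2 2) hc
      have c2 : (n : ℤ) ∣ x - (j - i) - i := by
        have e : x - (j - i) - i = x - j := by ring
        rw [e]; exact h2
      rw [if_neg c1, if_pos c2]; ring
    · simp only [if_neg h1, if_neg h2]

/-- The reflection `t_{i j} ∈ S̃_n`. -/
def tPerm (n : ℕ) (i j : ℤ) : Equiv.Perm ℤ :=
  ⟨tFun n i j, tFun n j i, fun x => tFun_comp n i j x, fun x => tFun_comp n j i x⟩

/-- The simple generator `s_i = t_{i, i+1} ∈ S̃_n`. -/
def sPerm (n : ℕ) (i : ℤ) : Equiv.Perm ℤ := tPerm n i (i + 1)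


section Helpers

lemma dvd_shift' {n : ℤ} (a k b : ℤ) : n ∣ (a + k*n) - b ↔ n ∣ a - b := by
  have h : (a + k*n) - b = (a - b) + n*k := by ring
  rw [h, dvd_add_left (dvd_mul_right n k)]

lemma dvd_cong' {n a b : ℤ} (h : n ∣ a) (e : b = a) : n ∣ b := e ▸ h

lemma not_dvd_near {n : ℕ} (hn : 2 ≤ n) {a b : ℤ} (h : (n:ℤ) ∣ a) (e : a - b = 1 ∨ b - a = 1) :
    ¬ (n:ℤ) ∣ b := by
  intro hb
  have h1 : (n:ℤ) ∣ 1 := by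
    rcases e with e | e
    · exact e ▸ dvd_sub h hb
    · exact e ▸ dvd_sub hb h
  have := Int.le_of_dvd one_pos h1
  omega

lemma sPerm_apply (n : ℕ) (i x : ℤ) :
    sPerm n i x = if (n : ℤ) ∣ x - i then x + 1 else if (n : ℤ) ∣ x - (i+1) then x - 1 else x := by
  show tFun n i (i+1) x = _
  unfold tFun
  norm_num

lemma sPerm_shift (n : ℕ) (i x k : ℤ) : sPerm n i (x + k*n) = sPerm n i x + k*n := by
  rw [sPerm_apply, sPerm_apply]
  simp only [dvd_shift']
  split_ifs <;> ring

lemma sPerm_invol (n : ℕ) (hn : 2 ≤ n) (i x : ℤ) : sPerm n i (sPerm n i x) = x := by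
  rw [sPerm_apply n i x]
  by_cases h1 : (n:ℤ) ∣ x - i
  · rw [if_pos h1, sPerm_apply]
    rw [if_neg (not_dvd_near hn h1 (by right; ring)),
        if_pos (dvd_cong' h1 (by ring))]
    ring
  · rw [if_neg h1]
    by_cases h2 : (n:ℤ) ∣ x - (i+1)
    · rw [if_pos h2, sPerm_apply,
        if_pos (dvd_cong' h2 (by ring))]
      ring
    · rw [if_neg h2, sPerm_apply, if_neg h1, if_neg h2]

lemma sPerm_at_base (n : ℕ) (hn : 2 ≤ n) (i : ℤ) :
    sPerm n i i = i + 1 ∧ sPerm n i (i+1) = i := by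
  constructor
  · rw [sPerm_apply, if_pos (by simp)]
  · have h1 : ¬ (n:ℤ) ∣ (i+1) - i := by
      intro h
      have h2 : (n:ℤ) ∣ 1 := dvd_cong' h (by ring)
      have := Int.le_of_dvd one_pos h2
      omega
    rw [sPerm_apply, if_neg h1, if_pos (by simp)]
    ring

lemma sPerm_lt {n : ℕ} (hn : 2 ≤ n) {i a b : ℤ} (hab : a < b)
    (h : ¬((n:ℤ) ∣ a - i ∧ b = a + 1)) : sPerm n i a < sPerm n i b := by
  have key : ∀ u v : ℤ, (n:ℤ) ∣ u - v → u ≠ v → u < v ∨ v + n ≤ u := by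
    intro u v huv hne
    rcases lt_or_gt_of_ne hne with hl | hg
    · exact Or.inl hl
    · right
      have := Int.le_of_dvd (by omega) huv
      omega
  rw [sPerm_apply, sPerm_apply]
  split_ifs with h1 h2 h3 h4 h5 h6 h7 h8 h9 <;> try omega
  · have hne : b ≠ a + 1 := fun e => h ⟨h1, e⟩
    rcases key b (a+1) (dvd_cong' (dvd_sub h3 h1) (by ring)) hne with hc | hc <;> omega
  · have hne : b ≠ a + 1 := fun e => h1 (dvd_cong' h8 (by rw [e]; ring))
    omega

def nrmK (n : ℕ) (p : ℤ × ℤ) : ℤ := -((p.1 - 1) / n)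

def nrm (n : ℕ) (p : ℤ × ℤ) : ℤ × ℤ := (p.1 + nrmK n p * n, p.2 + nrmK n p * n)

lemma nrm_fst (n : ℕ) (hn : 1 ≤ n) (p : ℤ × ℤ) : 1 ≤ (nrm n p).1 ∧ (nrm n p).1 ≤ n := by
  have h0 : (0:ℤ) < n := by exact_mod_cast hn
  have e : (nrm n p).1 = (p.1 - 1) % n + 1 := by
    show p.1 + -((p.1 - 1) / n) * n = _
    have h := Int.mul_ediv_add_emod (p.1 - 1) (n:ℤ)
    linarith
  rw [e]
  have h1 := Int.emod_nonneg (p.1 - 1) (by omega : (n:ℤ) ≠ 0)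
  have h2 := Int.emod_lt_of_pos (p.1 - 1) h0
  omega

lemma nrm_shift (n : ℕ) (hn : 1 ≤ n) (a b k : ℤ) :
    nrm n (a + k * n, b + k * n) = nrm n (a, b) := by
  have h0 : (n:ℤ) ≠ 0 := by exact_mod_cast (by omega : n ≠ 0)
  have e : (a + k * n - 1) = (a - 1) + k * n := by ring
  unfold nrm nrmK
  simp only [e, Int.add_mul_ediv_right _ _ h0]
  rw [Prod.mk.injEq]
  constructor <;> ring

lemma nrm_self (n : ℕ) {p : ℤ × ℤ} (h1 : 1 ≤ p.1) (h2 : p.1 ≤ (n:ℤ)) : nrm n p = p := by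
  have : (p.1 - 1) / n = 0 := Int.ediv_eq_zero_of_lt (by omega) (by omega)
  unfold nrm nrmK
  rw [this]
  simp

lemma perm_shift {n : ℕ} {w : Equiv.Perm ℤ} (hw : ∀ x : ℤ, w (x + n) = w x + n)
    (k x : ℤ) : w (x + k * n) = w x + k * n := by
  have hw' : ∀ y : ℤ, w (y - n) = w y - n := by
    intro y
    have h := hw (y - n)
    rw [sub_add_cancel] at h
    omega
  induction k using Int.induction_on with
  | zero => simp
  | succ m ih =>
      have e : x + ((m:ℤ) + 1) * n = (x + (m:ℤ) * n) + n := by ring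
      rw [e, hw, ih]; ring
  | pred m ih =>
      have e : x + (-(m:ℤ) - 1) * n = (x + (-(m:ℤ)) * n) - n := by ring
      rw [e, hw', ih]; ring

lemma inv_set_finite {n : ℕ} (hn : 1 ≤ n) {w : Equiv.Perm ℤ}
    (hw : ∀ x : ℤ, w (x + n) = w x + n) :
    {p : ℤ × ℤ | 1 ≤ p.1 ∧ p.1 ≤ (n:ℤ) ∧ p.1 < p.2 ∧ w p.2 < w p.1}.Finite := by
  have hne : (Finset.Icc (1:ℤ) (n:ℤ)).Nonempty := ⟨1, by simp; exact_mod_cast hn⟩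
  have hne' : ((Finset.Icc (1:ℤ) (n:ℤ)).image w).Nonempty := hne.image w
  set M := ((Finset.Icc (1:ℤ) (n:ℤ)).image w).max' hne' with hM
  set m := ((Finset.Icc (1:ℤ) (n:ℤ)).image w).min' hne' with hm
  have hMle : ∀ x : ℤ, 1 ≤ x → x ≤ n → w x ≤ M := fun x hx1 hx2 =>
    Finset.le_max' _ _ (Finset.mem_image_of_mem w (Finset.mem_Icc.mpr ⟨hx1, hx2⟩))
  have hmle : ∀ x : ℤ, 1 ≤ x → x ≤ n → m ≤ w x := fun x hx1 hx2 =>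
    Finset.min'_le _ _ (Finset.mem_image_of_mem w (Finset.mem_Icc.mpr ⟨hx1, hx2⟩))
  apply Set.Finite.subset (Set.finite_Icc ((1:ℤ), (1:ℤ)) ((n:ℤ), (n:ℤ) + (M - m)))
  rintro ⟨a, b⟩ ⟨ha1, ha2, hab, hwb⟩
  simp only [Set.mem_Icc, Prod.le_def]
  have h0 : (0:ℤ) < n := by exact_mod_cast hn
  set r : ℤ := (b - 1) % n + 1 with hr
  set q : ℤ := (b - 1) / n with hq
  have hrange : 1 ≤ r ∧ r ≤ n := by
    have h1 := Int.emod_nonneg (b - 1) (by omega : (n:ℤ) ≠ 0)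
    have h2 := Int.emod_lt_of_pos (b - 1) h0
    omega
  have hbrq : b = r + q * n := by
    have h := Int.mul_ediv_add_emod (b - 1) (n:ℤ)
    rw [hr, hq]; linarith
  have hq0 : 0 ≤ q := Int.ediv_nonneg (by omega) (by omega)
  have hwbr : w b = w r + q * n := by rw [hbrq]; exact perm_shift hw q r
  have h1 : w r + q * n ≤ M := by
    rw [← hwbr]
    exact le_trans (le_of_lt hwb) (hMle a ha1 ha2)
  have h2 : m ≤ w r := hmle r hrange.1 hrange.2
  have hqn : 0 ≤ q * n := mul_nonneg hq0 (by omega)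
  refine ⟨⟨ha1, by omega⟩, ha2, ?_⟩
  have h3 : q * n ≤ M - m := by linarith
  omega

lemma affLen_eq_ncard (n : ℕ) (w : Equiv.Perm ℤ) :
    affLen n w = {p : ℤ × ℤ | 1 ≤ p.1 ∧ p.1 ≤ (n:ℤ) ∧ p.1 < p.2 ∧ w p.2 < w p.1}.ncard := by
  rw [← Nat.card_coe_set_eq]
  rfl

lemma affLen_sPerm_mul {n : ℕ} (hn : 2 ≤ n) {w : Equiv.Perm ℤ}
    (hw : ∀ x : ℤ, w (x + n) = w x + n) {i : ℤ}
    (hcond : w.symm i < w.symm (i+1)) :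
    affLen n (sPerm n i * w) = affLen n w + 1 := by
  set u := w.symm i with hu
  set v := w.symm (i+1) with hv
  have hwu : w u = i := w.apply_symm_apply i
  have hwv : w v = i + 1 := w.apply_symm_apply (i+1)
  set A := {p : ℤ × ℤ | 1 ≤ p.1 ∧ p.1 ≤ (n:ℤ) ∧ p.1 < p.2 ∧ w p.2 < w p.1} with hA
  set B := {p : ℤ × ℤ | 1 ≤ p.1 ∧ p.1 ≤ (n:ℤ) ∧ p.1 < p.2 ∧
      (sPerm n i * w) p.2 < (sPerm n i * w) p.1} with hB
  set K := nrmK n (u, v) with hKdef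
  have hnK : nrm n (u, v) = (u + K * n, v + K * n) := rfl
  have key₁ : ∀ a b : ℤ, a < b → w b < w a → sPerm n i (w b) < sPerm n i (w a) := by
    intro a b hab hba
    refine sPerm_lt hn hba ?_
    rintro ⟨⟨c, hc⟩, he⟩
    have hb : b = u + c * n := by
      apply w.injective
      rw [perm_shift hw, hwu]
      linarith
    have ha : a = v + c * n := by
      apply w.injective
      rw [perm_shift hw, hwv]
      linarith
    have : v < u := by omega
    omega
  have key₂ : ∀ a b : ℤ, a < b → sPerm n i (w b) < sPerm n i (w a) →
      ¬((n:ℤ) ∣ w a - i ∧ w b = w a + 1) → w b < w a := by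
    intro a b hab hs hspec
    rcases lt_trichotomy (w b) (w a) with h' | h' | h'
    · exact h'
    · exact absurd (w.injective h') (by omega)
    · exact absurd (sPerm_lt hn h' hspec) (by omega)
  have hmemB : nrm n (u, v) ∈ B := by
    obtain ⟨e1, e2⟩ := nrm_fst n (by omega) (u, v)
    refine ⟨e1, e2, ?_, ?_⟩
    · rw [hnK]
      simpa using hcond
    · rw [hnK]
      show sPerm n i (w (v + K * n)) < sPerm n i (w (u + K * n))
      rw [perm_shift hw, perm_shift hw, hwu, hwv, sPerm_shift, sPerm_shift,
        (sPerm_at_base n hn i).1, (sPerm_at_base n hn i).2]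
      linarith
  have hnotA : nrm n (u, v) ∉ A := by
    rintro ⟨-, -, -, h4⟩
    rw [hnK] at h4
    simp only at h4
    rw [perm_shift hw, perm_shift hw, hwu, hwv] at h4
    linarith
  have hBeq : B = insert (nrm n (u, v)) A := by
    ext ⟨a, b⟩
    constructor
    · rintro ⟨h1', h2', h3', h4'⟩
      by_cases hsp : (n:ℤ) ∣ w a - i ∧ w b = w a + 1
      · left
        obtain ⟨⟨c, hc⟩, he⟩ := hsp
        have ha : a = u + c * n := by
          apply w.injective
          rw [perm_shift hw, hwu]
          linarith
        have hb : b = v + c * n := by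
          apply w.injective
          rw [perm_shift hw, hwv]
          linarith
        have : nrm n (u + c * n, v + c * n) = nrm n (u, v) := nrm_shift n (by omega) u v c
        rw [← ha, ← hb] at this
        rw [← this, nrm_self n h1' h2']
      · right
        exact ⟨h1', h2', h3', key₂ a b h3' h4' hsp⟩
    · rintro (he | ⟨h1', h2', h3', h4'⟩)
      · rw [he]; exact hmemB
      · exact ⟨h1', h2', h3', key₁ a b h3' h4'⟩
  have hAfin : A.Finite := inv_set_finite (by omega) hw
  rw [affLen_eq_ncard, affLen_eq_ncard, ← hA, ← hB, hBeq,
    Set.ncard_insert_of_notMem hnotA hAfin]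

lemma affLen_mul_sPerm {n : ℕ} (hn : 2 ≤ n) {w : Equiv.Perm ℤ}
    (hw : ∀ x : ℤ, w (x + n) = w x + n) {i : ℤ}
    (hcond : w i < w (i+1)) :
    affLen n (w * sPerm n i) = affLen n w + 1 := by
  set A := {p : ℤ × ℤ | 1 ≤ p.1 ∧ p.1 ≤ (n:ℤ) ∧ p.1 < p.2 ∧ w p.2 < w p.1} with hA
  set B := {p : ℤ × ℤ | 1 ≤ p.1 ∧ p.1 ≤ (n:ℤ) ∧ p.1 < p.2 ∧
      (w * sPerm n i) p.2 < (w * sPerm n i) p.1} with hB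
  set f : ℤ × ℤ → ℤ × ℤ := fun p => nrm n (sPerm n i p.1, sPerm n i p.2) with hf
  set p₀ := nrm n (i, i + 1) with hp₀
  -- f ∘ f = id on normalized pairs
  have hff : ∀ a b : ℤ, 1 ≤ a → a ≤ (n:ℤ) → f (f (a, b)) = (a, b) := by
    intro a b h1 h2
    set K := nrmK n (sPerm n i a, sPerm n i b) with hK
    have e1 : f (a, b) = (sPerm n i a + K * n, sPerm n i b + K * n) := rfl
    rw [e1]
    show nrm n (sPerm n i (sPerm n i a + K * n), sPerm n i (sPerm n i b + K * n)) = _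
    rw [sPerm_shift, sPerm_shift, sPerm_invol n hn, sPerm_invol n hn,
      nrm_shift n (by omega), nrm_self n h1 h2]
  -- special pairs cannot be images
  have hnospec : ∀ a b : ℤ, a < b → ¬((n:ℤ) ∣ sPerm n i a - i ∧ sPerm n i b = sPerm n i a + 1) := by
    rintro a b hab ⟨hd, he⟩
    have ha : a = sPerm n i a + 1 := by
      have := sPerm_invol n hn i a
      rw [sPerm_apply n i (sPerm n i a), if_pos hd] at this
      omega
    have hb : b = sPerm n i a := by
      have h3 := sPerm_invol n hn i b
      rw [he] at h3
      rw [sPerm_apply n i (sPerm n i a + 1),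
        if_neg (not_dvd_near hn hd (by right; ring)),
        if_pos (dvd_cong' hd (by ring))] at h3
      omega
    omega
  have hexc : ∀ a b : ℤ, w b < w a → ¬((n:ℤ) ∣ a - i ∧ b = a + 1) := by
    rintro a b hba ⟨⟨c, hc⟩, he⟩
    have ha : a = i + c * n := by linarith
    have hwa : w a = w i + c * n := by rw [ha]; exact perm_shift hw c i
    have hwb : w b = w (i+1) + c * n := by
      rw [he, ha]
      have e : i + c * n + 1 = (i + 1) + c * n := by ring
      rw [e]
      exact perm_shift hw c (i+1)
    linarith
  have himgB : ∀ p ∈ A, f p ∈ B := by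
    rintro ⟨a, b⟩ ⟨h1', h2', h3', h4'⟩
    set K := nrmK n (sPerm n i a, sPerm n i b) with hK
    have e1 : f (a, b) = (sPerm n i a + K * n, sPerm n i b + K * n) := rfl
    obtain ⟨e2, e3⟩ := nrm_fst n (by omega) (sPerm n i a, sPerm n i b)
    have hsab : sPerm n i a < sPerm n i b := sPerm_lt hn h3' (hexc a b h4')
    refine ⟨e2, e3, ?_, ?_⟩
    · rw [e1]; simpa using hsab
    · rw [e1]
      show w (sPerm n i (sPerm n i b + K * n)) < w (sPerm n i (sPerm n i a + K * n))
      rw [sPerm_shift, sPerm_shift, sPerm_invol n hn, sPerm_invol n hn,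
        perm_shift hw, perm_shift hw]
      linarith
  have hK₀ : p₀ = (i + nrmK n (i, i+1) * n, (i+1) + nrmK n (i, i+1) * n) := rfl
  have hp₀B : p₀ ∈ B := by
    obtain ⟨e1, e2⟩ := nrm_fst n (by omega) (i, i+1)
    refine ⟨e1, e2, ?_, ?_⟩
    · rw [hK₀]; simp
    · rw [hK₀]
      show w (sPerm n i ((i+1) + nrmK n (i, i+1) * n)) < w (sPerm n i (i + nrmK n (i, i+1) * n))
      rw [sPerm_shift, sPerm_shift, (sPerm_at_base n hn i).1, (sPerm_at_base n hn i).2,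
        perm_shift hw, perm_shift hw]
      linarith
  have hp₀spec : (n:ℤ) ∣ p₀.1 - i ∧ p₀.2 = p₀.1 + 1 := by
    rw [hK₀]
    constructor
    · exact dvd_cong' (dvd_mul_left (n:ℤ) (nrmK n (i, i+1))) (by ring)
    · ring
  have hp₀notimg : p₀ ∉ f '' A := by
    rintro ⟨⟨a, b⟩, ⟨-, -, h3', -⟩, he⟩
    set K := nrmK n (sPerm n i a, sPerm n i b) with hK
    have e1 : f (a, b) = (sPerm n i a + K * n, sPerm n i b + K * n) := rfl
    rw [e1] at he
    obtain ⟨hd, he2⟩ := hp₀spec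
    rw [← he] at hd he2
    simp only at hd he2
    have hd' : (n:ℤ) ∣ sPerm n i a - i := (dvd_shift' _ _ _).mp hd
    exact hnospec a b h3' ⟨hd', by omega⟩
  have hBeq : B = insert p₀ (f '' A) := by
    ext ⟨a, b⟩
    constructor
    · rintro ⟨h1', h2', h3', h4'⟩
      have h4w : w (sPerm n i b) < w (sPerm n i a) := h4'
      by_cases hsp : (n:ℤ) ∣ a - i ∧ b = a + 1
      · left
        obtain ⟨⟨c, hc⟩, he⟩ := hsp
        have ha : a = i + c * n := by linarith
        have hb : b = (i + 1) + c * n := by omega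
        have : nrm n (i + c * n, (i+1) + c * n) = nrm n (i, i+1) := nrm_shift n (by omega) i (i+1) c
        rw [← ha, ← hb] at this
        rw [hp₀, ← this, nrm_self n h1' h2']
      · right
        have hsab : sPerm n i a < sPerm n i b := sPerm_lt hn h3' hsp
        refine ⟨nrm n (sPerm n i a, sPerm n i b), ?_, ?_⟩
        · set K := nrmK n (sPerm n i a, sPerm n i b) with hK
          obtain ⟨e2, e3⟩ := nrm_fst n (by omega) (sPerm n i a, sPerm n i b)
          refine ⟨e2, e3, by
            show sPerm n i a + K * n < sPerm n i b + K * n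
            linarith, ?_⟩
          show w ((sPerm n i b + K * n)) < w ((sPerm n i a + K * n))
          rw [perm_shift hw, perm_shift hw]
          linarith
        · exact hff a b h1' h2'
    · rintro (he | ⟨q, hq, he⟩)
      · rw [he]; exact hp₀B
      · rw [← he]; exact himgB q hq
  have hinj : Set.InjOn f A := by
    intro p hp q hq he
    have h1 := hff p.1 p.2 hp.1 hp.2.1
    have h2 := hff q.1 q.2 hq.1 hq.2.1
    calc p = f (f (p.1, p.2)) := by rw [h1]
    _ = f (f (q.1, q.2)) := by rw [show ((p.1 : ℤ), (p.2 : ℤ)) = p from rfl,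
        show ((q.1 : ℤ), (q.2 : ℤ)) = q from rfl, he]
    _ = q := by rw [h2]
  have hAfin : A.Finite := inv_set_finite (by omega) hw
  rw [affLen_eq_ncard, affLen_eq_ncard, ← hA, ← hB, hBeq,
    Set.ncard_insert_of_notMem hp₀notimg (hAfin.image f),
    Set.ncard_image_of_injOn hinj]

end Helpers

/-- If `z ∈ Ĩ_n`, `z i ≠ i`, `z (i+1) ≠ i + 1` and `z i < z (i+1)`, then
`ℓ(s_i z s_i) = ℓ(z) + 2`. -/
theorem length_conj_add_two (n : ℕ) (hn : 2 ≤ n) (z : Equiv.Perm ℤ)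
    (hz : IsAffine n z) (hinv : ∀ x : ℤ, z (z x) = x) (i : ℤ)
    (h1 : z i ≠ i) (h2 : z (i + 1) ≠ i + 1) (h3 : z i < z (i + 1)) :
    affLen n (sPerm n i * z * sPerm n i) = affLen n z + 2 := by
  have hw := hz.1
  have hs_shift : ∀ x : ℤ, sPerm n i (x + n) = sPerm n i x + n := by
    intro x
    have h := sPerm_shift n i x 1
    rw [one_mul] at h
    exact h
  have hw1 : ∀ x : ℤ, (z * sPerm n i) (x + n) = (z * sPerm n i) x + n := by
    intro x
    show z (sPerm n i (x + n)) = z (sPerm n i x) + n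
    rw [hs_shift, hw]
  have step1 : affLen n (z * sPerm n i) = affLen n z + 1 := affLen_mul_sPerm hn hw h3
  have hsym : ∀ y : ℤ, (z * sPerm n i).symm y = sPerm n i (z y) := by
    intro y
    rw [Equiv.symm_apply_eq]
    show y = z (sPerm n i (sPerm n i (z y)))
    rw [sPerm_invol n hn, hinv]
  have hcond : (z * sPerm n i).symm i < (z * sPerm n i).symm (i+1) := by
    rw [hsym, hsym]
    refine sPerm_lt hn h3 ?_
    rintro ⟨⟨c, hc⟩, -⟩
    have hzi : z i = i + c * n := by linarith
    have h4 := perm_shift hw c i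
    rw [← hzi, hinv, hzi] at h4
    have hc0 : c * (n:ℤ) = 0 := by linarith
    have hn0 : (n:ℤ) ≠ 0 := by exact_mod_cast (by omega : n ≠ 0)
    rcases mul_eq_zero.mp hc0 with hc0 | hc0
    · apply h1
      rw [hzi, hc0]
      ring
    · exact hn0 hc0
  have step2 : affLen n (sPerm n i * (z * sPerm n i)) = affLen n (z * sPerm n i) + 1 :=
    affLen_sPerm_mul hn hw1 hcond
  rw [mul_assoc, step2, step1]
end

section
/- Let z ∈ Ĩ_n and i < j with j ≢ i (mod n). If j ≠ z(i) < z(j) ≠ i, and either i is a right endpoint of z (z(i) < i) or j is a left endpoint of z (j < z(j)), then ℓ(t_{ij} z t_{ij}) > ℓ(t_{ij} z) = ℓ(z t_{ij}) > ℓ(z). -/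
open Finset

/-- periodicity propagates to all multiples -/
lemma perMul {n : ℕ} {f : ℤ → ℤ} (hf : ∀ x : ℤ, f (x + n) = f x + n) :
    ∀ (k x : ℤ), f (x + n * k) = f x + n * k := by
  intro k
  induction k using Int.induction_on with
  | zero => simp
  | succ m ih =>
      intro x
      have h1 : x + (n : ℤ) * (m + 1) = (x + n * m) + n := by ring
      rw [h1, hf, ih]; ring
  | pred m ih =>
      intro x
      have h1 : (x + (n:ℤ) * (-(m:ℤ) - 1)) + n = x + n * (-(m:ℤ)) := by ring
      have h2 := hf (x + (n:ℤ) * (-(m:ℤ) - 1))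
      rw [h1, ih] at h2
      omega

lemma tFun_of_i {n : ℕ} {i j x : ℤ} (h : (n:ℤ) ∣ x - i) : tFun n i j x = x + (j - i) := by
  unfold tFun; rw [if_pos h]

lemma tFun_of_j {n : ℕ} {i j x : ℤ} (hd : ¬ (n:ℤ) ∣ j - i) (h : (n:ℤ) ∣ x - j) :
    tFun n i j x = x - (j - i) := by
  have h1 : ¬ (n:ℤ) ∣ x - i := by
    intro hc
    apply hd
    have e : j - i = (x - i) - (x - j) := by ring
    rw [e]; exact dvd_sub hc h
  unfold tFun; rw [if_neg h1, if_pos h]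

lemma tFun_of_o {n : ℕ} {i j x : ℤ} (h1 : ¬ (n:ℤ) ∣ x - i) (h2 : ¬ (n:ℤ) ∣ x - j) :
    tFun n i j x = x := by
  unfold tFun; rw [if_neg h1, if_neg h2]

lemma tFun_cases {n : ℕ} {i j : ℤ} (hd : ¬ (n:ℤ) ∣ j - i) (x : ℤ) :
    ((n:ℤ) ∣ x - i ∧ ¬ (n:ℤ) ∣ x - j ∧ tFun n i j x = x + (j - i)) ∨
    ((n:ℤ) ∣ x - j ∧ ¬ (n:ℤ) ∣ x - i ∧ tFun n i j x = x - (j - i)) ∨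
    (¬ (n:ℤ) ∣ x - i ∧ ¬ (n:ℤ) ∣ x - j ∧ tFun n i j x = x) := by
  by_cases h1 : (n:ℤ) ∣ x - i
  · left
    have h2 : ¬ (n:ℤ) ∣ x - j := by
      intro hc; apply hd
      have e : j - i = (x - i) - (x - j) := by ring
      rw [e]; exact dvd_sub h1 hc
    exact ⟨h1, h2, tFun_of_i h1⟩
  · by_cases h2 : (n:ℤ) ∣ x - j
    · exact Or.inr (Or.inl ⟨h2, h1, tFun_of_j hd h2⟩)
    · exact Or.inr (Or.inr ⟨h1, h2, tFun_of_o h1 h2⟩)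

lemma tFun_per {n : ℕ} (i j : ℤ) (x : ℤ) : tFun n i j (x + n) = tFun n i j x + n := by
  have key : ∀ y : ℤ, ((n:ℤ) ∣ y + n ↔ (n:ℤ) ∣ y) := fun y => by
    constructor
    · intro h; simpa using dvd_sub h (dvd_refl _)
    · intro h; exact dvd_add h (dvd_refl _)
  unfold tFun
  have e1 : x + (n:ℤ) - i = (x - i) + n := by ring
  have e2 : x + (n:ℤ) - j = (x - j) + n := by ring
  rw [e1, e2]
  by_cases h1 : (n:ℤ) ∣ x - i
  · rw [if_pos ((key _).mpr h1), if_pos h1]; ring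
  · rw [if_neg (fun hc => h1 ((key _).mp hc)), if_neg h1]
    by_cases h2 : (n:ℤ) ∣ x - j
    · rw [if_pos ((key _).mpr h2), if_pos h2]; ring
    · rw [if_neg (fun hc => h2 ((key _).mp hc)), if_neg h2]

lemma tFun_perMul {n : ℕ} (i j : ℤ) (k x : ℤ) :
    tFun n i j (x + n * k) = tFun n i j x + n * k :=
  perMul (tFun_per i j) k x

lemma tFun_invol {n : ℕ} {i j : ℤ} (hd : ¬ (n:ℤ) ∣ j - i) (x : ℤ) :
    tFun n i j (tFun n i j x) = x := by
  rcases tFun_cases hd x with ⟨h1, h2, e⟩ | ⟨h1, h2, e⟩ | ⟨h1, h2, e⟩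
  · rw [e]
    have hj : (n:ℤ) ∣ x + (j - i) - j := by
      have e2 : x + (j - i) - j = x - i := by ring
      rw [e2]; exact h1
    rw [tFun_of_j hd hj]; ring
  · rw [e]
    have hi : (n:ℤ) ∣ x - (j - i) - i := by
      have e2 : x - (j - i) - i = x - j := by ring
      rw [e2]; exact h1
    rw [tFun_of_i hi]; ring
  · rw [e, tFun_of_o h1 h2]

def Invs (n : ℕ) (w : Equiv.Perm ℤ) : Set (ℤ × ℤ) :=
  {p | 1 ≤ p.1 ∧ p.1 ≤ (n : ℤ) ∧ p.1 < p.2 ∧ w p.2 < w p.1}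

lemma affLen_eq (n : ℕ) (w : Equiv.Perm ℤ) : affLen n w = (Invs n w).ncard := by
  rw [← Nat.card_coe_set_eq]; rfl

def normPair (n : ℕ) (p : ℤ × ℤ) : ℤ × ℤ :=
  (p.1 - n * ((p.1 - 1) / n), p.2 - n * ((p.1 - 1) / n))

lemma normPair_bounds {n : ℕ} (hn : 0 < n) (p : ℤ × ℤ) :
    1 ≤ (normPair n p).1 ∧ (normPair n p).1 ≤ (n : ℤ) := by
  have h0 : (n:ℤ) ≠ 0 := by exact_mod_cast hn.ne'
  have h1 := Int.mul_ediv_add_emod (p.1 - 1) n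
  have h2 := Int.emod_nonneg (p.1 - 1) h0
  have h3 := Int.emod_lt_of_pos (p.1 - 1) (by exact_mod_cast hn : (0:ℤ) < n)
  unfold normPair
  constructor <;> simp only <;> omega

lemma invs_finite {n : ℕ} (hn : 0 < n) {w : Equiv.Perm ℤ}
    (hw : ∀ x : ℤ, w (x + n) = w x + n) : (Invs n w).Finite := by
  have hne : (Finset.Icc (1:ℤ) (n:ℤ)).Nonempty := by
    rw [Finset.nonempty_Icc]; exact_mod_cast hn
  set M := (Finset.Icc (1:ℤ) (n:ℤ)).sup' hne (fun r => w r) with hM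
  set K := (Finset.Icc (1:ℤ) (n:ℤ)).sup' hne (fun r => r - w r) with hK
  have h0 : (n:ℤ) ≠ 0 := by exact_mod_cast hn.ne'
  have hperm : ∀ (k x : ℤ), w (x + n * k) = w x + n * k := perMul hw
  apply Set.Finite.subset ((Finset.Icc (1:ℤ) (n:ℤ) ×ˢ Finset.Icc (2:ℤ) (M + K)).finite_toSet)
  intro p hp
  obtain ⟨a, b⟩ := p
  obtain ⟨hb1, hb2, hb3, hb4⟩ := hp
  simp only at hb1 hb2 hb3 hb4 ⊢
  simp only [Finset.coe_product, Set.mem_prod, Finset.mem_coe, Finset.mem_Icc]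
  refine ⟨⟨hb1, hb2⟩, by omega, ?_⟩
  -- bound b
  set r := b - (n:ℤ) * ((b - 1) / n) with hr
  have h1 := Int.mul_ediv_add_emod (b - 1) n
  have h2 := Int.emod_nonneg (b - 1) h0
  have h3 := Int.emod_lt_of_pos (b - 1) (by exact_mod_cast hn : (0:ℤ) < n)
  have hr1 : 1 ≤ r ∧ r ≤ (n:ℤ) := by constructor <;> omega
  have hwb : w b = w r + n * ((b - 1) / n) := by
    have : b = r + n * ((b - 1) / n) := by omega
    rw [this, hperm]
    simp [hr]
  have hKr : r - w r ≤ K := Finset.le_sup' (fun r => r - w r) (Finset.mem_Icc.mpr hr1)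
  have hMa : w a ≤ M := Finset.le_sup' (fun r => w r) (Finset.mem_Icc.mpr ⟨hb1, hb2⟩)
  -- b = r + n*((b-1)/n), w b = w r + n*(..) so b - w b = r - w r ≤ K
  have : b - w b ≤ K := by omega
  omega

lemma ncard_lt_of_injOn {S T : Set (ℤ × ℤ)} (F : ℤ × ℤ → ℤ × ℤ) (hinj : Set.InjOn F S)
    (hmap : Set.MapsTo F S T) (x0 : ℤ × ℤ) (hx0 : x0 ∈ T) (hx0' : x0 ∉ F '' S)
    (hT : T.Finite) : S.ncard < T.ncard := by
  have h1 : (F '' S).ncard = S.ncard := Set.ncard_image_of_injOn hinj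
  have h2 : F '' S ⊂ T := by
    constructor
    · exact Set.mapsTo_iff_image_subset.mp hmap
    · intro hle; exact hx0' (hle hx0)
  rw [← h1]
  exact Set.ncard_lt_ncard h2 hT

lemma ncard_le_of_injOn {S T : Set (ℤ × ℤ)} (F : ℤ × ℤ → ℤ × ℤ) (hinj : Set.InjOn F S)
    (hmap : Set.MapsTo F S T) (hT : T.Finite) : S.ncard ≤ T.ncard := by
  rw [← Set.ncard_image_of_injOn hinj]
  exact Set.ncard_le_ncard (Set.mapsTo_iff_image_subset.mp hmap) hT


lemma mult_eq_zero {n : ℤ} (hpos : 0 < n) {q : ℤ} (h1 : -n < n * q) (h2 : n * q < n) :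
    q = 0 := by
  by_contra h
  rcases lt_or_gt_of_ne h with h' | h'
  · have h3 : n * q ≤ n * (-1) := mul_le_mul_of_nonneg_left (by omega) hpos.le
    have h4 : n * (-1) = -n := by ring
    linarith
  · have h3 : n * 1 ≤ n * q := mul_le_mul_of_nonneg_left (by omega) hpos.le
    have h4 : n * 1 = n := by ring
    linarith

lemma perMul' {n : ℕ} {f : ℤ → ℤ} (hf : ∀ x : ℤ, f (x + n) = f x + n) (m x : ℤ) :
    f (x - n * m) = f x - n * m := by
  have h := perMul hf (-m) x
  have e : x + (n:ℤ) * (-m) = x - n * m := by ring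
  rw [e] at h
  linarith

lemma tFun_perMul' {n : ℕ} (i j : ℤ) (m x : ℤ) :
    tFun n i j (x - n * m) = tFun n i j x - n * m :=
  perMul' (tFun_per i j) m x

lemma key_lt {n : ℕ} (hn : 0 < n) {w : Equiv.Perm ℤ} (hw : ∀ x : ℤ, w (x + n) = w x + n)
    {i j : ℤ} (hij : i < j) (hd : ¬ (n:ℤ) ∣ j - i) (hlt : w i < w j) :
    affLen n w < affLen n (w * tPerm n i j) := by
  have hnz : (0:ℤ) < n := by exact_mod_cast hn
  have hwM : ∀ (k x : ℤ), w (x + n * k) = w x + n * k := perMul hw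
  have hwM' : ∀ (m x : ℤ), w (x - n * m) = w x - n * m := perMul' hw
  have hwt : ∀ x : ℤ, (w * tPerm n i j) x = w (tFun n i j x) := fun _ => rfl
  have hper2 : ∀ x : ℤ, (w * tPerm n i j) (x + n) = (w * tPerm n i j) x + n := by
    intro x; rw [hwt, hwt, tFun_per, hw]
  have hti : tFun n i j i = j := by
    rw [tFun_of_i ⟨0, by ring⟩]; ring
  have htj : tFun n i j j = i := by
    rw [tFun_of_j hd ⟨0, by ring⟩]; ring
  set F : ℤ × ℤ → ℤ × ℤ := fun p =>
    if tFun n i j p.1 < tFun n i j p.2 then normPair n (tFun n i j p.1, tFun n i j p.2)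
    else p with hF
  -- MapsTo
  have hmap : Set.MapsTo F (Invs n w) (Invs n (w * tPerm n i j)) := by
    intro p hp
    obtain ⟨a, b⟩ := p
    obtain ⟨ha1, ha2, hab, hiv⟩ := hp
    simp only at ha1 ha2 hab hiv
    by_cases hrev : tFun n i j a < tFun n i j b
    · have hFval : F (a, b) = normPair n (tFun n i j a, tFun n i j b) := by
        simp only [hF]; rw [if_pos hrev]
      rw [hFval]
      set m1 := (tFun n i j a - 1) / (n:ℤ) with hm1
      have hnb := normPair_bounds hn (tFun n i j a, tFun n i j b)
      have hnp : normPair n (tFun n i j a, tFun n i j b)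
          = (tFun n i j a - n * m1, tFun n i j b - n * m1) := rfl
      rw [hnp] at hnb ⊢
      refine ⟨hnb.1, hnb.2, by simp only; omega, ?_⟩
      simp only
      rw [hwt, hwt, tFun_perMul', tFun_perMul', tFun_invol hd, tFun_invol hd,
        hwM', hwM']
      omega
    · have hne : tFun n i j a ≠ tFun n i j b := by
        intro hcc
        have := congrArg (tFun n i j) hcc
        rw [tFun_invol hd, tFun_invol hd] at this
        omega
      have hrev' : tFun n i j b < tFun n i j a :=
        lt_of_le_of_ne (not_lt.mp hrev) (Ne.symm hne)
      have hFval : F (a, b) = (a, b) := by simp only [hF]; rw [if_neg hrev]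
      rw [hFval]
      refine ⟨ha1, ha2, hab, ?_⟩
      simp only
      rw [hwt, hwt]
      rcases tFun_cases hd a with ⟨hai, haj, ea⟩ | ⟨haj, hai, ea⟩ | ⟨hai, haj, ea⟩ <;>
        rcases tFun_cases hd b with ⟨hbi, hbj, eb⟩ | ⟨hbj, hbi, eb⟩ | ⟨hbi, hbj, eb⟩ <;>
          rw [ea, eb] at hrev' ⊢
      -- (I,I)
      · omega
      -- (I,J)
      · obtain ⟨k1, hk1⟩ := hai
        obtain ⟨k2, hk2⟩ := hbj
        have hwa : w a = w i + n * k1 := by rw [show a = i + (n:ℤ)*k1 by omega, hwM]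
        have hwb : w b = w j + n * k2 := by rw [show b = j + (n:ℤ)*k2 by omega, hwM]
        have hga : w (a + (j - i)) = w j + n * k1 := by
          rw [show a + (j - i) = j + (n:ℤ)*k1 by omega, hwM]
        have hgb : w (b - (j - i)) = w i + n * k2 := by
          rw [show b - (j - i) = i + (n:ℤ)*k2 by omega, hwM]
        rw [hga, hgb]
        have hk : (n:ℤ) * k2 < n * k1 := by linarith
        linarith
      -- (I,O)
      · obtain ⟨k1, hk1⟩ := hai
        have hwa : w a = w i + n * k1 := by rw [show a = i + (n:ℤ)*k1 by omega, hwM]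
        have hga : w (a + (j - i)) = w j + n * k1 := by
          rw [show a + (j - i) = j + (n:ℤ)*k1 by omega, hwM]
        rw [hga]
        linarith
      -- (J,I)
      · omega
      -- (J,J)
      · omega
      -- (J,O)
      · omega
      -- (O,I)
      · omega
      -- (O,J)
      · obtain ⟨k2, hk2⟩ := hbj
        have hwb : w b = w j + n * k2 := by rw [show b = j + (n:ℤ)*k2 by omega, hwM]
        have hgb : w (b - (j - i)) = w i + n * k2 := by
          rw [show b - (j - i) = i + (n:ℤ)*k2 by omega, hwM]
        rw [hgb]
        linarith
      -- (O,O)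
      · omega
  -- InjOn
  have hinj : Set.InjOn F (Invs n w) := by
    intro p hp q hq heq
    obtain ⟨a, b⟩ := p
    obtain ⟨c, e⟩ := q
    obtain ⟨ha1, ha2, hab, hiv⟩ := hp
    obtain ⟨hc1, hc2, hce, hiv'⟩ := hq
    simp only at ha1 ha2 hab hiv hc1 hc2 hce hiv'
    by_cases hr1 : tFun n i j a < tFun n i j b <;>
      by_cases hr2 : tFun n i j c < tFun n i j e
    · -- both then
      simp only [hF, if_pos hr1, if_pos hr2] at heq
      set m1 := (tFun n i j a - 1) / (n:ℤ) with hm1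
      set m2 := (tFun n i j c - 1) / (n:ℤ) with hm2
      have h1 : tFun n i j a - n * m1 = tFun n i j c - n * m2 :=
        congrArg Prod.fst heq
      have h2 : tFun n i j b - n * m1 = tFun n i j e - n * m2 :=
        congrArg Prod.snd heq
      have hdist : (n:ℤ) * (m1 - m2) = n * m1 - n * m2 := by ring
      have hc' : tFun n i j (tFun n i j c) = tFun n i j (tFun n i j a - n * (m1 - m2)) := by
        congr 1; omega
      have he' : tFun n i j (tFun n i j e) = tFun n i j (tFun n i j b - n * (m1 - m2)) := by
        congr 1; omega
      rw [tFun_invol hd, tFun_perMul', tFun_invol hd] at hc'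
      rw [tFun_invol hd, tFun_perMul', tFun_invol hd] at he'
      have hq0 : m1 - m2 = 0 := by
        apply mult_eq_zero hnz (q := m1 - m2) <;> omega
      rw [hq0, mul_zero, sub_zero] at hc' he'
      rw [Prod.mk.injEq]
      exact ⟨hc'.symm, he'.symm⟩
    · -- then / else
      simp only [hF, if_pos hr1, if_neg hr2] at heq
      exfalso
      set m1 := (tFun n i j a - 1) / (n:ℤ) with hm1
      have h1 : tFun n i j a - n * m1 = c := congrArg Prod.fst heq
      have h2 : tFun n i j b - n * m1 = e := congrArg Prod.snd heq
      have hc' : tFun n i j c = a - n * m1 := by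
        rw [← h1, tFun_perMul', tFun_invol hd]
      have he' : tFun n i j e = b - n * m1 := by
        rw [← h2, tFun_perMul', tFun_invol hd]
      rw [hc', he'] at hr2
      omega
    · -- else / then
      simp only [hF, if_neg hr1, if_pos hr2] at heq
      exfalso
      set m2 := (tFun n i j c - 1) / (n:ℤ) with hm2
      have h1 : a = tFun n i j c - n * m2 := congrArg Prod.fst heq
      have h2 : b = tFun n i j e - n * m2 := congrArg Prod.snd heq
      have ha' : tFun n i j a = c - n * m2 := by
        rw [h1, tFun_perMul', tFun_invol hd]
      have hb' : tFun n i j b = e - n * m2 := by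
        rw [h2, tFun_perMul', tFun_invol hd]
      rw [ha', hb'] at hr1
      omega
    · simp only [hF, if_neg hr1, if_neg hr2] at heq
      exact heq
  -- the extra element
  set m0 := ((i:ℤ) - 1) / (n:ℤ) with hm0
  set x0 : ℤ × ℤ := (i - n * m0, j - n * m0) with hx0
  have hx0mem : x0 ∈ Invs n (w * tPerm n i j) := by
    have hnb := normPair_bounds hn (i, j)
    have hnp : normPair n ((i:ℤ), j) = (i - n * m0, j - n * m0) := rfl
    rw [hnp] at hnb
    refine ⟨hnb.1, hnb.2, by simp only [hx0]; omega, ?_⟩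
    simp only [hx0]
    rw [hwt, hwt, tFun_perMul', tFun_perMul', hti, htj, hwM', hwM']
    omega
  have hx0nim : x0 ∉ F '' (Invs n w) := by
    rintro ⟨⟨a, b⟩, ⟨ha1, ha2, hab, hiv⟩, hFab⟩
    simp only at ha1 ha2 hab hiv
    by_cases hrev : tFun n i j a < tFun n i j b
    · simp only [hF, if_pos hrev] at hFab
      set m1 := (tFun n i j a - 1) / (n:ℤ) with hm1
      have h1 : tFun n i j a - n * m1 = i - n * m0 := congrArg Prod.fst hFab
      have h2 : tFun n i j b - n * m1 = j - n * m0 := congrArg Prod.snd hFab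
      have hdist : (n:ℤ) * (m0 - m1) = n * m0 - n * m1 := by ring
      have ha' : a = j - n * (m0 - m1) := by
        have : tFun n i j (tFun n i j a) = tFun n i j (i - n * (m0 - m1)) := by
          congr 1; omega
        rw [tFun_invol hd, tFun_perMul', hti] at this
        omega
      have hb' : b = i - n * (m0 - m1) := by
        have : tFun n i j (tFun n i j b) = tFun n i j (j - n * (m0 - m1)) := by
          congr 1; omega
        rw [tFun_invol hd, tFun_perMul', htj] at this
        omega
      omega
    · simp only [hF, if_neg hrev] at hFab
      have h1 : a = i - n * m0 := congrArg Prod.fst hFab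
      have h2 : b = j - n * m0 := congrArg Prod.snd hFab
      have hwa : w a = w i - n * m0 := by rw [h1, hwM']
      have hwb : w b = w j - n * m0 := by rw [h2, hwM']
      omega
  rw [affLen_eq, affLen_eq]
  exact ncard_lt_of_injOn F hinj hmap x0 hx0mem hx0nim (invs_finite hn hper2)

lemma perm_apply_inv_self (w : Equiv.Perm ℤ) (x : ℤ) : w (w⁻¹ x) = x :=
  w.apply_symm_apply x

lemma perm_inv_apply_self (w : Equiv.Perm ℤ) (x : ℤ) : w⁻¹ (w x) = x :=
  w.symm_apply_apply x

lemma inv_per {n : ℕ} {w : Equiv.Perm ℤ} (hw : ∀ x : ℤ, w (x + n) = w x + n) :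
    ∀ x : ℤ, w⁻¹ (x + n) = w⁻¹ x + n := by
  intro x
  apply w.injective
  rw [perm_apply_inv_self, hw, perm_apply_inv_self]

lemma key_inv_le {n : ℕ} (hn : 0 < n) {w : Equiv.Perm ℤ}
    (hw : ∀ x : ℤ, w (x + n) = w x + n) : affLen n w ≤ affLen n w⁻¹ := by
  have hnz : (0:ℤ) < n := by exact_mod_cast hn
  have hq : ∀ x : ℤ, w⁻¹ (x + n) = w⁻¹ x + n := inv_per hw
  have hM' : ∀ m x : ℤ, w⁻¹ (x - n * m) = w⁻¹ x - n * m := perMul' hq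
  set G : ℤ × ℤ → ℤ × ℤ := fun p => normPair n (w p.2, w p.1) with hG
  have hmap : Set.MapsTo G (Invs n w) (Invs n w⁻¹) := by
    intro p hp
    obtain ⟨a, b⟩ := p
    obtain ⟨ha1, ha2, hab, hiv⟩ := hp
    simp only at ha1 ha2 hab hiv
    set m1 := (w b - 1) / (n:ℤ) with hm1
    have hnb := normPair_bounds hn (w b, w a)
    have hnp : normPair n (w b, w a) = (w b - n * m1, w a - n * m1) := rfl
    have hGv : G (a, b) = (w b - n * m1, w a - n * m1) := by
      simp only [hG]; rw [hnp]
    rw [hnp] at hnb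
    rw [hGv]
    refine ⟨hnb.1, hnb.2, by simp only; omega, ?_⟩
    simp only
    rw [hM', hM', perm_inv_apply_self, perm_inv_apply_self]
    omega
  have hinj : Set.InjOn G (Invs n w) := by
    intro p hp q hq' heq
    obtain ⟨a, b⟩ := p
    obtain ⟨c, e⟩ := q
    obtain ⟨ha1, ha2, hab, hiv⟩ := hp
    obtain ⟨hc1, hc2, hce, hiv'⟩ := hq'
    simp only at ha1 ha2 hab hiv hc1 hc2 hce hiv'
    set m1 := (w b - 1) / (n:ℤ) with hm1
    set m2 := (w e - 1) / (n:ℤ) with hm2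
    have h1 : w b - n * m1 = w e - n * m2 := congrArg Prod.fst heq
    have h2 : w a - n * m1 = w c - n * m2 := congrArg Prod.snd heq
    have hdist : (n:ℤ) * (m1 - m2) = n * m1 - n * m2 := by ring
    have hc : c = a - n * (m1 - m2) := by
      have h3 := hM' (m1 - m2) (w a)
      rw [perm_inv_apply_self] at h3
      have e2 : w a - (n:ℤ) * (m1 - m2) = w c := by omega
      rw [e2, perm_inv_apply_self] at h3
      omega
    have he : e = b - n * (m1 - m2) := by
      have h3 := hM' (m1 - m2) (w b)
      rw [perm_inv_apply_self] at h3
      have e2 : w b - (n:ℤ) * (m1 - m2) = w e := by omega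
      rw [e2, perm_inv_apply_self] at h3
      omega
    have h0 : m1 - m2 = 0 := mult_eq_zero hnz (by omega) (by omega)
    rw [h0, mul_zero, sub_zero] at hc he
    rw [Prod.mk.injEq]
    exact ⟨hc.symm, he.symm⟩
  rw [affLen_eq, affLen_eq]
  exact ncard_le_of_injOn G hinj hmap (invs_finite hn hq)

lemma affLen_inv {n : ℕ} (hn : 0 < n) {w : Equiv.Perm ℤ}
    (hw : ∀ x : ℤ, w (x + n) = w x + n) : affLen n w = affLen n w⁻¹ := by
  refine le_antisymm (key_inv_le hn hw) ?_
  have h := key_inv_le hn (inv_per hw)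
  rwa [inv_inv] at h

lemma endpoint_lt {n : ℕ} (hn : 0 < n) {z : Equiv.Perm ℤ}
    (hz : ∀ x : ℤ, z (x + n) = z x + n) (hinv : ∀ x : ℤ, z (z x) = x) {i j : ℤ}
    (hij : i < j) (hd : ¬ (n:ℤ) ∣ j - i) (h2 : z i < z j)
    (hend : z i < i ∨ j < z j) : tFun n i j (z i) < tFun n i j (z j) := by
  have hnz : (0:ℤ) < n := by exact_mod_cast hn
  have hzM : ∀ k x : ℤ, z (x + n * k) = z x + n * k := perMul hz
  have ci : (n:ℤ) ∣ z i - i → z i = i := by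
    rintro ⟨k, hk⟩
    have h := hzM k i
    rw [show i + (n:ℤ) * k = z i by omega, hinv] at h
    have : (n:ℤ) * k = 0 := by omega
    omega
  have cj : (n:ℤ) ∣ z j - j → z j = j := by
    rintro ⟨k, hk⟩
    have h := hzM k j
    rw [show j + (n:ℤ) * k = z j by omega, hinv] at h
    have : (n:ℤ) * k = 0 := by omega
    omega
  have cji : (n:ℤ) ∣ z i - j → ∃ k : ℤ, z i = j + n * k ∧ z j = i - n * k := by
    rintro ⟨k, hk⟩
    refine ⟨k, by omega, ?_⟩
    have h := hzM k j
    rw [show j + (n:ℤ) * k = z i by omega, hinv] at h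
    omega
  have cbi : (n:ℤ) ∣ z j - i → ∃ k : ℤ, z j = i + n * k ∧ z i = j - n * k := by
    rintro ⟨k, hk⟩
    refine ⟨k, by omega, ?_⟩
    have h := hzM k i
    rw [show i + (n:ℤ) * k = z j by omega, hinv] at h
    omega
  rcases tFun_cases hd (z i) with ⟨hai, haj, ea⟩ | ⟨haj, hai, ea⟩ | ⟨hai, haj, ea⟩ <;>
    rcases tFun_cases hd (z j) with ⟨hbi, hbj, eb⟩ | ⟨hbj, hbi, eb⟩ | ⟨hbi, hbj, eb⟩ <;>
      rw [ea, eb]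
  -- (I,I)
  · have hzi := ci hai
    obtain ⟨k, hk1, hk2⟩ := cbi hbi
    exact absurd ⟨k, by linarith⟩ hd
  -- (I,J)
  · have hzi := ci hai
    have hzj := cj hbj
    clear hai haj hbi hbj hd ci cj cji cbi
    rcases hend with h | h <;> omega
  -- (I,O)
  · have hzi := ci hai
    clear hai haj hbi hbj hd ci cj cji cbi
    rcases hend with h | h <;> omega
  -- (J,I)
  · obtain ⟨k, hk1, hk2⟩ := cji haj
    clear hai haj hbi hbj hd ci cj cji cbi
    linarith
  -- (J,J)
  · obtain ⟨k, hk1, hk2⟩ := cji haj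
    have hzj := cj hbj
    have hr : (n:ℤ) * (-k) = -((n:ℤ) * k) := by ring
    exact absurd ⟨-k, by linarith⟩ hd
  -- (J,O)
  · obtain ⟨k, hk1, hk2⟩ := cji haj
    have hr : (n:ℤ) * (-k) = -((n:ℤ) * k) := by ring
    exact absurd ⟨-k, by linarith⟩ hbi
  -- (O,I)
  · obtain ⟨k, hk1, hk2⟩ := cbi hbi
    have hr : (n:ℤ) * (-k) = -((n:ℤ) * k) := by ring
    exact absurd ⟨-k, by linarith⟩ haj
  -- (O,J)
  · have hzj := cj hbj
    clear hai haj hbi hbj hd ci cj cji cbi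
    rcases hend with h | h <;> omega
  -- (O,O)
  · exact h2


/-- Let `z ∈ Ĩ_n` and `i < j` with `j ≢ i (mod n)`. If `j ≠ z i < z j ≠ i` and either `i`
is a right endpoint of `z` (`z i < i`) or `j` is a left endpoint of `z` (`j < z j`), then
`ℓ(t_{ij} z t_{ij}) > ℓ(t_{ij} z) = ℓ(z t_{ij}) > ℓ(z)`. -/
theorem leftright_bruhat (n : ℕ) (hn : 2 ≤ n) (z : Equiv.Perm ℤ)
    (hz : IsAffine n z) (hinv : ∀ x : ℤ, z (z x) = x) (i j : ℤ)
    (hij : i < j) (hmod : ¬ i ≡ j [ZMOD (n : ℤ)])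
    (h1 : z i ≠ j) (h2 : z i < z j) (h3 : z j ≠ i)
    (hend : z i < i ∨ j < z j) :
    affLen n (tPerm n i j * z) < affLen n (tPerm n i j * z * tPerm n i j) ∧
      affLen n (tPerm n i j * z) = affLen n (z * tPerm n i j) ∧
      affLen n z < affLen n (z * tPerm n i j) := by
  obtain ⟨hzper, -⟩ := hz
  have hd : ¬ (n:ℤ) ∣ j - i := fun h => hmod (Int.modEq_iff_dvd.mpr h)
  have hn0 : 0 < n := by omega
  have htzper : ∀ x : ℤ, (tPerm n i j * z) (x + n) = (tPerm n i j * z) x + n := by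
    intro x
    show tFun n i j (z (x + n)) = tFun n i j (z x) + n
    rw [hzper, tFun_per]
  refine ⟨?_, ?_, ?_⟩
  · have hlt : (tPerm n i j * z) i < (tPerm n i j * z) j := by
      show tFun n i j (z i) < tFun n i j (z j)
      exact endpoint_lt hn0 hzper hinv hij hd h2 hend
    exact key_lt hn0 htzper hij hd hlt
  · have hzz : z * z = 1 := by
      ext x
      simp only [Equiv.Perm.mul_apply, Equiv.Perm.one_apply]
      exact hinv x
    have htt : tPerm n i j * tPerm n i j = 1 := by
      ext x
      simp only [Equiv.Perm.mul_apply, Equiv.Perm.one_apply]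
      exact tFun_invol hd x
    have hzi : z⁻¹ = z := inv_eq_of_mul_eq_one_right hzz
    have hti : (tPerm n i j)⁻¹ = tPerm n i j := inv_eq_of_mul_eq_one_right htt
    have hrw : (tPerm n i j * z)⁻¹ = z * tPerm n i j := by
      rw [mul_inv_rev, hzi, hti]
    rw [← hrw]
    exact affLen_inv hn0 htzper
  · exact key_lt hn0 hzper hij hd h2
end

section
/- If θ is a weighted involution in S̃_n with positive weight, then there exists an index i ∈ [n] with θπ_i ≠ θ, i.e., the right descent set Des_R(θ) is nonempty. -/
open Finset

/-- A weighted involution in `S̃_n`, encoded as a pair `θ = (w, φ_R)` where `w ∈ Ĩ_n` is an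
affine involution and `φ_R : ℤ → ℕ` is the right form of the weight map: it is supported on
the right endpoints of `w` (where `w i < i`) and is `n`-periodic. -/
def IsWInv (n : ℕ) (θ : Equiv.Perm ℤ × (ℤ → ℕ)) : Prop :=
  IsAffine n θ.1 ∧ (∀ x : ℤ, θ.1 (θ.1 x) = x) ∧
    (∀ i : ℤ, ¬ θ.1 i < i → θ.2 i = 0) ∧ (∀ i : ℤ, θ.2 (i + n) = θ.2 i)

/-- The right operator `π_i` on weighted involutions `θ = (w, φ)` (encoded via the right
form `φ_R`).  If `φ_R i > φ_R (i+1)` then `θ π_i = (s_i w s_i, ψ)` where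
`ψ_R j = φ_R i - 1` for `j ≡ i + 1 (mod n)`, `ψ_R j = φ_R (i+1)` for `j ≡ i (mod n)` and
`ψ_R j = φ_R j` otherwise; if `φ_R i ≤ φ_R (i+1)` then `θ π_i = θ`. -/
def piR (n : ℕ) (i : ℤ) (θ : Equiv.Perm ℤ × (ℤ → ℕ)) : Equiv.Perm ℤ × (ℤ → ℕ) :=
  if θ.2 (i + 1) < θ.2 i then
    (sPerm n i * θ.1 * sPerm n i,
      fun j => if j ≡ i + 1 [ZMOD (n : ℤ)] then θ.2 i - 1
        else if j ≡ i [ZMOD (n : ℤ)] then θ.2 (i + 1)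
        else θ.2 j)
  else θ

/-- The weight of a weighted involution: the sum of `φ` over representatives of the
equivalence classes of cycles, i.e. the sum of the right form over a window `[n]`. -/
noncomputable def wtW (n : ℕ) (θ : Equiv.Perm ℤ × (ℤ → ℕ)) : ℕ :=
  ∑ i ∈ Finset.Icc (1 : ℤ) (n : ℤ), θ.2 i

/-- If `θ` is a weighted involution of positive weight, then some `i ∈ [n]` has
`θ π_i ≠ θ`, i.e. the right descent set `Des_R(θ)` is nonempty. -/
theorem exists_right_descent (n : ℕ) (hn : 2 ≤ n) (θ : Equiv.Perm ℤ × (ℤ → ℕ))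
    (hθ : IsWInv n θ) (hwt : 0 < wtW n θ) :
    ∃ i ∈ Finset.Icc (1 : ℤ) (n : ℤ), piR n i θ ≠ θ := by
  by_contra hcon
  push_neg at hcon
  -- From no descent: φ is weakly increasing on the window
  have hmono : ∀ i : ℤ, 1 ≤ i → i ≤ (n : ℤ) → θ.2 i ≤ θ.2 (i + 1) := by
    intro i h1 h2
    by_contra hlt
    push_neg at hlt
    have heq := hcon i (Finset.mem_Icc.mpr ⟨h1, h2⟩)
    unfold piR at heq
    rw [if_pos hlt] at heq
    have h2nd := congrFun (congrArg Prod.snd heq) i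
    simp only at h2nd
    have hne1 : ¬ (i ≡ i + 1 [ZMOD (n : ℤ)]) := by
      intro h
      have hd : (n : ℤ) ∣ 1 := by simpa using h.dvd
      have := Int.le_of_dvd one_pos hd
      omega
    rw [if_neg hne1, if_pos (Int.ModEq.refl i)] at h2nd
    omega
  have hstep : ∀ m : ℕ, ∀ i : ℤ, 1 ≤ i → i + (m : ℤ) ≤ (n : ℤ) + 1 →
      θ.2 i ≤ θ.2 (i + (m : ℤ)) := by
    intro m
    induction m with
    | zero => simp
    | succ k ih =>
      intro i h1 h2
      push_cast at h2
      have hi : θ.2 i ≤ θ.2 (i + 1) := hmono i h1 (by omega)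
      have hk := ih (i + 1) (by omega) (by omega)
      have he : i + 1 + (k : ℤ) = i + ((k : ℕ) + 1 : ℕ) := by push_cast; ring
      rw [he] at hk
      exact le_trans hi hk
  have hper : θ.2 (1 + (n : ℤ)) = θ.2 1 := hθ.2.2.2 1
  have hconst : ∀ i ∈ Finset.Icc (1 : ℤ) (n : ℤ), θ.2 i = θ.2 1 := by
    intro i hi
    rw [Finset.mem_Icc] at hi
    have hge : θ.2 1 ≤ θ.2 i := by
      have h := hstep (i - 1).toNat 1 le_rfl
        (by rw [Int.toNat_of_nonneg (by omega)]; omega)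
      rwa [Int.toNat_of_nonneg (by omega), show (1 : ℤ) + (i - 1) = i by ring] at h
    have hle : θ.2 i ≤ θ.2 1 := by
      have h := hstep ((n : ℤ) + 1 - i).toNat i hi.1
        (by rw [Int.toNat_of_nonneg (by omega)]; omega)
      rw [Int.toNat_of_nonneg (by omega),
        show i + ((n : ℤ) + 1 - i) = 1 + (n : ℤ) by ring, hper] at h
      exact h
    omega
  have hpos : 0 < θ.2 1 := by
    by_contra h
    push_neg at h
    have h0 : θ.2 1 = 0 := by omega
    have hz : wtW n θ = 0 := by
      unfold wtW
      apply Finset.sum_eq_zero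
      intro i hi
      rw [hconst i hi, h0]
    omega
  have hneg : ∀ i ∈ Finset.Icc (1 : ℤ) (n : ℤ), θ.1 i - i ≤ -1 := by
    intro i hi
    have hp : 0 < θ.2 i := by rw [hconst i hi]; exact hpos
    by_contra hc
    push_neg at hc
    have hz : θ.2 i = 0 := hθ.2.2.1 i (by omega)
    omega
  have hsum := hθ.1.2
  have hlt : ∑ i ∈ Finset.Icc (1 : ℤ) (n : ℤ), (θ.1 i - i) < 0 := by
    have h1 : ∑ i ∈ Finset.Icc (1 : ℤ) (n : ℤ), (θ.1 i - i) ≤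
        ∑ _i ∈ Finset.Icc (1 : ℤ) (n : ℤ), (-1 : ℤ) := Finset.sum_le_sum hneg
    have h2 : ∑ _i ∈ Finset.Icc (1 : ℤ) (n : ℤ), (-1 : ℤ) = -(n : ℤ) := by
      rw [Finset.sum_const, Int.card_Icc]
      simp
    omega
  omega
end
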